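/- Let x, x′ ∈ {−1, +1}ⁿ and define z ∈ {0,1}ⁿ by z_i := (x_i − x′_i)²/4. Let G be a real n×n matrix and let ε, d > 0 and λ, β, γ ∈ ℝ with γ < 1 and λ < 1 − γ. Suppose: (i) the operator norm of E := (n/(ε·d))·G − x xᵀ satisfies ‖E‖ ≤ λ·n; (ii) ⟨z ⊙ x, G·x⟩ ≥ (1−γ)·ε·d·(∑_i z_i − β·n) and ⟨z ⊙ x′, G·x′⟩ ≥ (1−γ)·ε·d·(∑_i z_i − β·n). Then (1 − γ − λ)·∑_i z_i ≤ (1−γ)·β·n + (∑_i z_i)²/n. -/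

import Mathlib

set_option autoImplicit false

open Matrix

/-- Let `x, x' ∈ {±1}ⁿ`, `z_i := (x_i − x'_i)²/4`, `G` a real `n×n`
matrix, `ε, d > 0`, `γ < 1`, `λ < 1 − γ`. If the spectral norm of
`E := (n/(εd))G − xxᵀ` satisfies `‖E‖ ≤ λn`, and the majority-voting bounds
`⟨z ⊙ x, Gx⟩ ≥ (1−γ)εd(∑ᵢ zᵢ − βn)` and `⟨z ⊙ x', Gx'⟩ ≥ (1−γ)εd(∑ᵢ zᵢ − βn)` hold,
then `(1 − γ − λ)∑ᵢ zᵢ ≤ (1−γ)βn + (∑ᵢ zᵢ)²/n`. -/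
theorem stmt_16 (n : ℕ) (x x' : Fin n → ℝ)
    (hx : ∀ i, x i = 1 ∨ x i = -1) (hx' : ∀ i, x' i = 1 ∨ x' i = -1)
    (z : Fin n → ℝ) (hz : ∀ i, z i = (x i - x' i) ^ 2 / 4)
    (G : Matrix (Fin n) (Fin n) ℝ) (ε d lam β γ : ℝ)
    (hε : 0 < ε) (hd : 0 < d) (hγ : γ < 1) (hlam : lam < 1 - γ)
    (hE : ‖Matrix.toEuclideanCLM (𝕜 := ℝ)
        (((n : ℝ) / (ε * d)) • G - vecMulVec x x)‖ ≤ lam * n)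
    (hmaj : (1 - γ) * ε * d * ((∑ i, z i) - β * n) ≤ (fun i => z i * x i) ⬝ᵥ G.mulVec x)
    (hmaj' : (1 - γ) * ε * d * ((∑ i, z i) - β * n) ≤ (fun i => z i * x' i) ⬝ᵥ G.mulVec x') :
    (1 - γ - lam) * (∑ i, z i) ≤ (1 - γ) * β * n + (∑ i, z i) ^ 2 / n := by
  rcases Nat.eq_zero_or_pos n with hn | hn
  · subst hn
    simp
  have hnR : (0 : ℝ) < n := by exact_mod_cast hn
  set s : ℝ := ∑ i, z i with hs
  set v : Fin n → ℝ := fun i => z i * x i with hv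
  -- basic pointwise facts
  have hz01 : ∀ i, z i = 0 ∨ z i = 1 := by
    intro i
    rcases hx i with h1 | h1 <;> rcases hx' i with h2 | h2 <;>
      simp [hz i, h1, h2] <;> norm_num
  have hzx' : ∀ i, z i * x' i = -(z i * x i) := by
    intro i
    rcases hx i with h1 | h1 <;> rcases hx' i with h2 | h2 <;>
      simp [hz i, h1, h2] <;> norm_num
  have hdiff : ∀ i, x i - x' i = 2 * v i := by
    intro i
    rcases hx i with h1 | h1 <;> rcases hx' i with h2 | h2 <;>
      simp [hv, hz i, h1, h2] <;> norm_num
  have hvx : ∀ i, v i * x i = z i := by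
    intro i
    rcases hx i with h1 | h1 <;> simp [hv, h1]
  have hvsq : ∀ i, v i * v i = z i := by
    intro i
    rcases hz01 i with h | h <;> rcases hx i with h1 | h1 <;> simp [hv, h, h1]
  have hs0 : 0 ≤ s := by
    apply Finset.sum_nonneg
    intro i _
    rcases hz01 i with h | h <;> simp [h]
  -- Step A : (1-γ)εd(s - βn) ≤ v ⬝ᵥ G v
  have hA : (1 - γ) * ε * d * (s - β * n) ≤ v ⬝ᵥ G.mulVec v := by
    have h2 : (fun i => z i * x' i) ⬝ᵥ G.mulVec x' = -(v ⬝ᵥ G.mulVec x') := by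
      rw [← neg_dotProduct]
      congr 1
      funext i
      simpa using (hzx' i).symm ▸ rfl
    have hx'' : x' = fun i => x i - 2 * v i := by
      funext i; have := hdiff i; linarith
    have key : 2 * ((1 - γ) * ε * d * (s - β * n)) ≤ 2 * (v ⬝ᵥ G.mulVec v) := by
      have := add_le_add hmaj hmaj'
      rw [h2] at this
      have hsplit : v ⬝ᵥ G.mulVec x + -(v ⬝ᵥ G.mulVec x') = 2 * (v ⬝ᵥ G.mulVec v) := by
        rw [hx'']
        have : (fun i => x i - 2 * v i) = x - (2 : ℝ) • v := by
          funext i; simp [smul_eq_mul]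
        rw [this, Matrix.mulVec_sub, Matrix.mulVec_smul, dotProduct_sub,
          dotProduct_smul]
        ring_nf
      linarith [hsplit ▸ this]
    linarith
  -- Step B : quadratic form of M
  set M : Matrix (Fin n) (Fin n) ℝ := ((n : ℝ) / (ε * d)) • G - vecMulVec x x with hM
  have hvxs : v ⬝ᵥ x = s := by
    simp only [dotProduct, hs]
    exact Finset.sum_congr rfl fun i _ => hvx i
  have hvv : v ⬝ᵥ v = s := by
    simp only [dotProduct, hs]
    exact Finset.sum_congr rfl fun i _ => hvsq i
  have hB : v ⬝ᵥ M.mulVec v = ((n : ℝ) / (ε * d)) * (v ⬝ᵥ G.mulVec v) - s ^ 2 := by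
    rw [hM, Matrix.sub_mulVec, dotProduct_sub, Matrix.smul_mulVec,
      dotProduct_smul, smul_eq_mul]
    congr 1
    have hq : v ⬝ᵥ (vecMulVec x x).mulVec v = (v ⬝ᵥ x) * (x ⬝ᵥ v) := by
      simp only [dotProduct, mulVec, vecMulVec_apply, Finset.mul_sum, Finset.sum_mul]
      exact Finset.sum_congr rfl fun i _ => Finset.sum_congr rfl fun j _ => by ring
    rw [hq, hvxs, dotProduct_comm, hvxs]
    ring
  -- Step C : |quadratic form of M| ≤ ‖M‖ * s
  set V : EuclideanSpace ℝ (Fin n) := (WithLp.equiv 2 (Fin n → ℝ)).symm v with hV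
  have hVnorm : ‖V‖ ^ 2 = s := by
    rw [← real_inner_self_eq_norm_sq]
    simp only [PiLp.inner_apply, RCLike.inner_apply, conj_trivial, hV]
    rw [hs]
    exact Finset.sum_congr rfl fun i _ => hvsq i
  have hCinner : (inner ℝ V (Matrix.toEuclideanCLM (𝕜 := ℝ) M V) : ℝ) = v ⬝ᵥ M.mulVec v := by
    rw [hV, WithLp.equiv_symm_apply, Matrix.toEuclideanCLM_toLp]
    simp only [PiLp.inner_apply, RCLike.inner_apply, conj_trivial]
    simp [dotProduct, Matrix.toLin'_apply, mul_comm]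
  have hC : v ⬝ᵥ M.mulVec v ≤ lam * n * s := by
    rw [← hCinner]
    calc (inner ℝ V (Matrix.toEuclideanCLM (𝕜 := ℝ) M V) : ℝ)
        ≤ ‖V‖ * ‖Matrix.toEuclideanCLM (𝕜 := ℝ) M V‖ := real_inner_le_norm _ _
      _ ≤ ‖V‖ * (‖Matrix.toEuclideanCLM (𝕜 := ℝ) M‖ * ‖V‖) := by
          gcongr
          exact ContinuousLinearMap.le_opNorm _ _
      _ ≤ ‖V‖ * (lam * n * ‖V‖) := by
          have h0 : 0 ≤ ‖V‖ := norm_nonneg _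
          nlinarith [norm_nonneg (Matrix.toEuclideanCLM (𝕜 := ℝ) M V)]
      _ = lam * n * ‖V‖ ^ 2 := by ring
      _ = lam * n * s := by rw [hVnorm]
  -- combine
  have hεd : 0 < ε * d := mul_pos hε hd
  have hGv : v ⬝ᵥ G.mulVec v = (ε * d / n) * (v ⬝ᵥ M.mulVec v + s ^ 2) := by
    rw [hB]
    field_simp
    ring
  rw [hGv] at hA
  have hfin : (1 - γ) * ε * d * (s - β * n) ≤ (ε * d / n) * (lam * n * s + s ^ 2) := by
    have : (ε * d / n) * (v ⬝ᵥ M.mulVec v + s ^ 2) ≤ (ε * d / n) * (lam * n * s + s ^ 2) := by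
      apply mul_le_mul_of_nonneg_left _ (by positivity)
      linarith
    linarith
  have hdiv : (1 - γ) * (s - β * n) ≤ lam * s + s ^ 2 / n := by
    have h1 : (1 - γ) * ε * d * (s - β * n) = (ε * d) * ((1 - γ) * (s - β * n)) := by ring
    have h2 : (ε * d / n) * (lam * n * s + s ^ 2) = (ε * d) * (lam * s + s ^ 2 / n) := by
      field_simp
    rw [h1, h2] at hfin
    exact le_of_mul_le_mul_left hfin hεd
  nlinarith [hdiv]
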